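/- Corollary (group size identification): under the assumptions of the main identification theorem, the probability of the relevant complier event is identified as P(c(G, Z) = 1) = E[h(Z)·D], where h is constructed as in the theorem from λ_S = E[c(g(S), Z)]. -/

import Mathlib

open MeasureTheory ProbabilityTheory Matrix

/-- `Γ(z)`: the vector of subset products over nonempty subsets of `{1,…,J}`. -/
def GamB (J : ℕ) (z : Fin J → Bool) (S : {S : Finset (Fin J) // S.Nonempty}) : ℝ :=
  ∏ j ∈ S.1, if z j then 1 else 0

/-- `E[Γ(Z)]`. -/
noncomputable def EGamB {Ω : Type*} [MeasurableSpace Ω] (μ : Measure Ω) {J : ℕ}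
    (Z : Ω → Fin J → Bool) (S : {S : Finset (Fin J) // S.Nonempty}) : ℝ :=
  ∫ ω, GamB J (Z ω) S ∂μ

/-- `Σ = Var(Γ(Z))`. -/
noncomputable def SigB {Ω : Type*} [MeasurableSpace Ω] (μ : Measure Ω) {J : ℕ}
    (Z : Ω → Fin J → Bool) :
    Matrix {S : Finset (Fin J) // S.Nonempty} {S : Finset (Fin J) // S.Nonempty} ℝ :=
  Matrix.of fun S T =>
    ∫ ω, (GamB J (Z ω) S - EGamB μ Z S) * (GamB J (Z ω) T - EGamB μ Z T) ∂μ

/-- `h(z) = λ'Σ⁻¹(Γ(z) − EΓ)`. -/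
noncomputable def hB {Ω : Type*} [MeasurableSpace Ω] (μ : Measure Ω) {J : ℕ}
    (Z : Ω → Fin J → Bool) (lam : {S : Finset (Fin J) // S.Nonempty} → ℝ)
    (z : Fin J → Bool) : ℝ :=
  lam ⬝ᵥ ((SigB μ Z)⁻¹ *ᵥ fun S => GamB J z S - EGamB μ Z S)

/-- The indicator vector of a subset `S`. -/
def chi {J : ℕ} (S : Finset (Fin J)) : Fin J → Bool := fun j => decide (j ∈ S)

/-- The Sperner family `F(g)` of a monotone boolean function `g`. -/
def spernerOf {J : ℕ} (g : (Fin J → Bool) → Bool) : Finset (Finset (Fin J)) :=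
  Finset.univ.filter fun S =>
    g (chi S) = true ∧ ∀ T ⊆ S, T ≠ S → g (chi T) = false

/-- The inclusion-exclusion coefficient `M_{F,S'}`. -/
def Mcoef {J : ℕ} (F : Finset (Finset (Fin J))) (S' : Finset (Fin J)) : ℝ :=
  ∑ f ∈ F.powerset.filter (fun f => f.Nonempty ∧ f.sup id = S'),
    (-1 : ℝ) ^ (f.card + 1)



lemma pfun_eq {J : ℕ} (z : Fin J → Bool) (S : Finset (Fin J)) :
    (∏ j ∈ S, if z j then (1:ℝ) else 0) = if ∀ j ∈ S, z j = true then 1 else 0 := by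
  split_ifs with h
  · exact Finset.prod_eq_one fun j hj => by simp [h j hj]
  · push_neg at h
    obtain ⟨j, hj, hzj⟩ := h
    exact Finset.prod_eq_zero hj (by simp [hzj])

lemma pfun_union {J : ℕ} (z : Fin J → Bool) (A B : Finset (Fin J)) :
    (∏ j ∈ A, if z j then (1:ℝ) else 0) * (∏ j ∈ B, if z j then (1:ℝ) else 0)
      = ∏ j ∈ A ∪ B, if z j then (1:ℝ) else 0 := by
  rw [pfun_eq, pfun_eq, pfun_eq]
  split_ifs <;> simp_all [Finset.forall_mem_union]
  obtain ⟨x, hx, hfx⟩ := ‹∃ x, (x ∈ A ∨ x ∈ B) ∧ z x = false›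
  rcases hx with h | h <;> simp_all

lemma pfun_sup {J : ℕ} (z : Fin J → Bool) (f : Finset (Finset (Fin J))) :
    (∏ S ∈ f, ∏ j ∈ S, if z j then (1:ℝ) else 0)
      = ∏ j ∈ f.sup id, if z j then (1:ℝ) else 0 := by
  induction f using Finset.cons_induction with
  | empty => simp
  | cons a f ha ih =>
      rw [Finset.prod_cons, ih, Finset.sup_cons, pfun_union]
      rfl

section Sperner
variable {J : ℕ} {g : (Fin J → Bool) → Bool}

lemma exists_sperner_subset {S : Finset (Fin J)} (hS : g (chi S) = true) :
    ∃ S' ∈ spernerOf g, S' ⊆ S := by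
  induction S using Finset.strongInduction with
  | _ S ih =>
    by_cases h : ∀ T ⊆ S, T ≠ S → g (chi T) = false
    · exact ⟨S, Finset.mem_filter.2 ⟨Finset.mem_univ _, hS, h⟩, subset_rfl⟩
    · push_neg at h
      obtain ⟨T, hTS, hne, hT⟩ := h
      obtain ⟨S', hS', hsub⟩ := ih T (Finset.ssubset_iff_subset_ne.2 ⟨hTS, hne⟩)
        (by simpa using hT)
      exact ⟨S', hS', hsub.trans hTS⟩

lemma monotone_char (hg : Monotone g) (z : Fin J → Bool) :
    g z = true ↔ ∃ S ∈ spernerOf g, ∀ j ∈ S, z j = true := by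
  constructor
  · intro hz
    have hchi : chi (Finset.univ.filter fun j => z j = true) = z := by
      funext j; simp [chi]
    obtain ⟨S', hS', hsub⟩ := exists_sperner_subset (g := g)
      (S := Finset.univ.filter fun j => z j = true) (by rw [hchi]; exact hz)
    exact ⟨S', hS', fun j hj => by simpa using (Finset.mem_filter.1 (hsub hj)).2⟩
  · rintro ⟨S, hSF, hall⟩
    have hgS : g (chi S) = true := (Finset.mem_filter.1 hSF).2.1
    have hle : chi S ≤ z := by
      intro j
      by_cases hj : j ∈ S
      · simp [chi, hj, hall j hj]
      · simp [chi, hj]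
    have := hg hle
    rw [hgS] at this
    exact le_antisymm (Bool.le_true _) this

end Sperner

section IE
variable {J : ℕ} {g : (Fin J → Bool) → Bool}

lemma empty_not_mem_sperner (hg : Monotone g) (hne : g ≠ fun _ => true) :
    ∅ ∉ spernerOf g := by
  intro h
  have h0 : g (chi (∅ : Finset (Fin J))) = true := (Finset.mem_filter.1 h).2.1
  apply hne
  funext z
  have hle : chi (∅ : Finset (Fin J)) ≤ z := by
    intro j; simp [chi]
  have := hg hle
  rw [h0] at this
  exact le_antisymm (Bool.le_true _) this

lemma Mcoef_empty (hF : (∅ : Finset (Fin J)) ∉ F) : Mcoef F ∅ = 0 := by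
  rw [Mcoef]
  apply Finset.sum_eq_zero
  intro f hf
  simp only [Finset.mem_filter, Finset.mem_powerset] at hf
  obtain ⟨hfF, ⟨x, hx⟩, hsup⟩ := hf
  have : x = ∅ := by
    have := Finset.le_sup (f := id) hx
    rw [hsup] at this
    exact Finset.subset_empty.1 this
  exact absurd (hfF (this ▸ hx)) hF

lemma ie_pointwise (hg : Monotone g) (hne : g ≠ fun _ => true) (z : Fin J → Bool) :
    (if g z = true then (1:ℝ) else 0)
      = ∑ S : {S : Finset (Fin J) // S.Nonempty}, Mcoef (spernerOf g) S.1 * GamB J z S := by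
  classical
  set F := spernerOf g with hF
  set P : Finset (Fin J) → ℝ := fun S => ∏ j ∈ S, if z j then (1:ℝ) else 0 with hP
  -- step a
  have ha : (if g z = true then (1:ℝ) else 0) = 1 - ∏ S ∈ F, (1 - P S) := by
    by_cases hgz : g z = true
    · obtain ⟨S, hSF, hall⟩ := (monotone_char hg z).1 hgz
      rw [hgz, if_pos rfl, Finset.prod_eq_zero hSF (by rw [hP]; simp only [pfun_eq, if_pos hall]; ring), sub_zero]
    · rw [if_neg hgz, Finset.prod_eq_one, sub_self]
      intro S hSF
      have : ¬ ∀ j ∈ S, z j = true := fun hall => hgz ((monotone_char hg z).2 ⟨S, hSF, hall⟩)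
      rw [hP]; simp only [pfun_eq, if_neg this]; ring
  -- step b
  have hb : ∏ S ∈ F, (1 - P S)
      = ∑ f ∈ F.powerset, (-1 : ℝ) ^ f.card * P (f.sup id) := by
    have : ∀ S ∈ F, (1:ℝ) - P S = (fun S => -P S) S + (fun _ => (1:ℝ)) S := by
      intro S _; simp; ring
    rw [Finset.prod_congr rfl this, Finset.prod_add]
    apply Finset.sum_congr rfl
    intro f hf
    rw [Finset.prod_const_one, mul_one]
    have : ∏ S ∈ f, -P S = (-1:ℝ)^f.card * ∏ S ∈ f, P S := by
      rw [← Finset.prod_const (-1 : ℝ), ← Finset.prod_mul_distrib]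
      exact Finset.prod_congr rfl fun S _ => by ring
    rw [this, hP]
    simp only []
    rw [pfun_sup]
  -- step c : split off the empty set
  have hsplit : ∑ f ∈ F.powerset, (-1 : ℝ) ^ f.card * P (f.sup id)
      = 1 + ∑ f ∈ F.powerset.filter (fun f => f.Nonempty), (-1 : ℝ) ^ f.card * P (f.sup id) := by
    rw [← Finset.sum_filter_add_sum_filter_not F.powerset (fun f => f.Nonempty)]
    have hemp : F.powerset.filter (fun f => ¬ f.Nonempty) = {∅} := by
      ext f
      simp [Finset.not_nonempty_iff_eq_empty]
      rintro rfl; exact Finset.empty_subset _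
    rw [hemp, Finset.sum_singleton]
    simp [hP]
    ring
  have hc : (if g z = true then (1:ℝ) else 0)
      = ∑ f ∈ F.powerset.filter (fun f => f.Nonempty), (-1 : ℝ) ^ (f.card + 1) * P (f.sup id) := by
    rw [ha, hb, hsplit]
    have hneg : ∑ f ∈ F.powerset.filter (fun f => f.Nonempty), (-1 : ℝ) ^ (f.card + 1) * P (f.sup id)
        = -∑ f ∈ F.powerset.filter (fun f => f.Nonempty), (-1 : ℝ) ^ f.card * P (f.sup id) := by
      rw [← Finset.sum_neg_distrib]
      exact Finset.sum_congr rfl fun f _ => by ring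
    rw [hneg]; ring
  -- step d : regroup by sup
  rw [hc]
  have hGam : ∀ S : {S : Finset (Fin J) // S.Nonempty}, GamB J z S = P S.1 := fun S => rfl
  have hd : ∑ S : {S : Finset (Fin J) // S.Nonempty}, Mcoef F S.1 * GamB J z S
      = ∑ S' : Finset (Fin J), Mcoef F S' * P S' := by
    simp only [hGam]
    rw [← Finset.sum_subtype (Finset.univ.filter (fun S : Finset (Fin J) => S.Nonempty))
      (p := fun S : Finset (Fin J) => S.Nonempty) (by simp) (fun S' => Mcoef F S' * P S')]
    rw [← Finset.sum_filter_add_sum_filter_not Finset.univ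
      (fun S : Finset (Fin J) => S.Nonempty) (fun S' => Mcoef F S' * P S')]
    have hemp : Finset.univ.filter (fun S : Finset (Fin J) => ¬ S.Nonempty) = {∅} := by
      ext S; simp [Finset.not_nonempty_iff_eq_empty]
    rw [hemp, Finset.sum_singleton, Mcoef_empty (empty_not_mem_sperner hg hne), zero_mul, add_zero]
  rw [hd]
  have : ∀ S' : Finset (Fin J), Mcoef F S' * P S'
      = ∑ f ∈ (F.powerset.filter (fun f => f.Nonempty)).filter (fun f => f.sup id = S'),
          (-1 : ℝ) ^ (f.card + 1) * P (f.sup id) := by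
    intro S'
    rw [Mcoef, Finset.sum_mul, Finset.filter_filter]
    apply Finset.sum_congr rfl
    intro f hf
    simp only [Finset.mem_filter] at hf
    rw [hf.2.2]
  rw [Finset.sum_congr rfl (fun S' _ => this S')]
  exact (Finset.sum_fiberwise_of_maps_to
    (fun (f : Finset (Finset (Fin J))) _ => Finset.mem_univ (f.sup id))
    (fun (f : Finset (Finset (Fin J))) => (-1 : ℝ) ^ (f.card + 1) * P (f.sup id))).symm

section LinAlg
variable {J : ℕ}

abbrev NES (J : ℕ) := {S : Finset (Fin J) // S.Nonempty}

lemma gam_chi (T : Finset (Fin J)) (S : NES J) :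
    GamB J (chi T) S = if S.1 ⊆ T then 1 else 0 := by
  rw [GamB, pfun_eq]
  congr 1
  simp [chi, Finset.subset_iff, eq_iff_iff]

lemma gam_bot (S : NES J) : GamB J (fun _ => false) S = 0 := by
  obtain ⟨j, hj⟩ := S.2
  exact Finset.prod_eq_zero hj (by simp)

lemma vanish_of_eval (v : NES J → ℝ)
    (hT : ∀ T : Finset (Fin J), ∑ S : NES J, v S * (if S.1 ⊆ T then (1:ℝ) else 0) = 0) :
    v = 0 := by
  have main : ∀ T : Finset (Fin J), ∀ hT' : T.Nonempty, v ⟨T, hT'⟩ = 0 := by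
    intro T
    induction T using Finset.strongInduction with
    | _ T ih =>
      intro hTne
      have h := hT T
      rw [Finset.sum_eq_single (⟨T, hTne⟩ : NES J)] at h
      · simpa using h
      · intro S _ hne
        by_cases hsub : S.1 ⊆ T
        · have hss : S.1 ⊂ T := Finset.ssubset_iff_subset_ne.2
            ⟨hsub, fun h' => hne (Subtype.ext h')⟩
          have := ih S.1 hss S.2
          simp [this]
        · simp [hsub]
      · intro h; exact absurd (Finset.mem_univ _) h
  funext S
  exact (main S.1 S.2).trans rfl

lemma sig_det_ne_zero (q : (Fin J → Bool) → ℝ) (hq1 : ∑ z, q z = 1) (hqpos : ∀ z, 0 < q z)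
    (EGam : NES J → ℝ) (hEGam : ∀ S, EGam S = ∑ z, q z * GamB J z S)
    (Sigm : Matrix (NES J) (NES J) ℝ)
    (hSig : ∀ S T, Sigm S T = ∑ z, q z * ((GamB J z S - EGam S) * (GamB J z T - EGam T))) :
    Sigm.det ≠ 0 := by
  intro hdet
  obtain ⟨v, hv0, hv⟩ := (Matrix.exists_mulVec_eq_zero_iff).2 hdet
  have hquad : v ⬝ᵥ (Sigm *ᵥ v)
      = ∑ z, q z * (∑ S : NES J, v S * (GamB J z S - EGam S))^2 := by
    simp only [dotProduct, mulVec, hSig, Finset.mul_sum, Finset.sum_mul, sq]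
    refine Eq.trans (Finset.sum_congr rfl fun x _ => Finset.sum_comm) ?_
    refine Eq.trans Finset.sum_comm ?_
    refine Finset.sum_congr rfl fun z _ => ?_
    refine Finset.sum_congr rfl fun S _ => ?_
    refine Finset.sum_congr rfl fun T _ => by ring
  rw [hv, dotProduct_zero] at hquad
  have hz : ∀ z, ∑ S : NES J, v S * (GamB J z S - EGam S) = 0 := by
    intro z
    have hnn : ∀ z ∈ Finset.univ, 0 ≤ q z * (∑ S : NES J, v S * (GamB J z S - EGam S))^2 :=
      fun z _ => mul_nonneg (hqpos z).le (sq_nonneg _)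
    have := (Finset.sum_eq_zero_iff_of_nonneg hnn).1 hquad.symm z (Finset.mem_univ z)
    rcases mul_eq_zero.1 this with h | h
    · exact absurd h (hqpos z).ne'
    · exact pow_eq_zero_iff (by norm_num) |>.1 h
  -- deduce the constant is zero
  have hsplit : ∀ z, ∑ S : NES J, v S * GamB J z S = ∑ S : NES J, v S * EGam S := by
    intro z
    have := hz z
    rw [← sub_eq_zero, ← Finset.sum_sub_distrib]
    simpa [mul_sub] using this
  have hk : ∑ S : NES J, v S * EGam S = 0 := by
    have := hsplit (fun _ => false)
    simp only [gam_bot, mul_zero, Finset.sum_const_zero] at this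
    exact this.symm
  have hT : ∀ T : Finset (Fin J), ∑ S : NES J, v S * (if S.1 ⊆ T then (1:ℝ) else 0) = 0 := by
    intro T
    have := hsplit (chi T)
    simp only [gam_chi] at this
    rw [this, hk]
  exact hv0 (vanish_of_eval v hT)

lemma swap_sum {ι' : Type*} [Fintype ι'] (A : Matrix ι' ι' ℝ) (lam : ι' → ℝ)
    (r : (Fin J → Bool) → ℝ) (w : (Fin J → Bool) → ι' → ℝ) :
    ∑ z, r z * (lam ⬝ᵥ (A *ᵥ w z)) = lam ⬝ᵥ (A *ᵥ fun S => ∑ z, r z * w z S) := by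
  simp only [dotProduct, mulVec, Finset.mul_sum]
  refine Eq.trans Finset.sum_comm ?_
  refine Finset.sum_congr rfl fun T _ => ?_
  refine Eq.trans Finset.sum_comm ?_
  refine Finset.sum_congr rfl fun S _ => ?_
  refine Finset.sum_congr rfl fun z _ => by ring

end LinAlg

section Key
variable {J : ℕ}

lemma key_lemma (q : (Fin J → Bool) → ℝ) (hq1 : ∑ z, q z = 1) (hqpos : ∀ z, 0 < q z)
    (EGam : NES J → ℝ) (hEGam : ∀ S, EGam S = ∑ z, q z * GamB J z S)
    (Sigm : Matrix (NES J) (NES J) ℝ)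
    (hSig : ∀ S T, Sigm S T = ∑ z, q z * ((GamB J z S - EGam S) * (GamB J z T - EGam T)))
    (lam : NES J → ℝ) (g : (Fin J → Bool) → Bool) (hg : Monotone g)
    (cg : (Fin J → Bool) → ℝ)
    (hcg_true : g = (fun _ => true) → ∀ z, cg z = 0)
    (hcgM : g ≠ (fun _ => true) →
      ∑ z, q z * cg z = ∑ S : NES J, Mcoef (spernerOf g) S.1 * lam S) :
    ∑ z, q z * cg z
      = ∑ z, q z * ((lam ⬝ᵥ (Sigm⁻¹ *ᵥ fun S => GamB J z S - EGam S))
          * (if g z = true then (1:ℝ) else 0)) := by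
  classical
  have hzero : ∀ S : NES J, ∑ z, q z * (GamB J z S - EGam S) = 0 := by
    intro S
    simp only [mul_sub]
    rw [Finset.sum_sub_distrib, ← Finset.sum_mul, hq1, one_mul, ← hEGam, sub_self]
  by_cases hg1 : g = fun _ => true
  · have hL : ∑ z, q z * cg z = 0 :=
      Finset.sum_eq_zero fun z _ => by rw [hcg_true hg1 z, mul_zero]
    rw [hL]
    symm
    calc ∑ z, q z * ((lam ⬝ᵥ (Sigm⁻¹ *ᵥ fun S => GamB J z S - EGam S))
          * (if g z = true then (1:ℝ) else 0))
        = ∑ z, q z * (lam ⬝ᵥ (Sigm⁻¹ *ᵥ fun S => GamB J z S - EGam S)) :=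
          Finset.sum_congr rfl fun z _ => by rw [hg1]; simp
      _ = lam ⬝ᵥ (Sigm⁻¹ *ᵥ fun S => ∑ z, q z * (GamB J z S - EGam S)) :=
          swap_sum _ _ _ _
      _ = 0 := by
          have h0 : (fun S : NES J => ∑ z, q z * (GamB J z S - EGam S)) = 0 :=
            funext fun S => hzero S
          rw [h0, Matrix.mulVec_zero, dotProduct_zero]
  · have hdet := sig_det_ne_zero q hq1 hqpos EGam hEGam Sigm hSig
    set Mv : NES J → ℝ := fun S => Mcoef (spernerOf g) S.1 with hMv
    have hu : (fun S : NES J => ∑ z, (q z * (if g z = true then (1:ℝ) else 0))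
        * (GamB J z S - EGam S)) = Sigm *ᵥ Mv := by
      funext S
      calc ∑ z, (q z * (if g z = true then (1:ℝ) else 0)) * (GamB J z S - EGam S)
          = ∑ z, ∑ T : NES J, q z * (Mcoef (spernerOf g) T.1 * GamB J z T)
              * (GamB J z S - EGam S) := by
            refine Finset.sum_congr rfl fun z _ => ?_
            rw [ie_pointwise hg hg1 z, Finset.mul_sum, Finset.sum_mul]
        _ = ∑ T : NES J, Mv T * ∑ z, q z * (GamB J z T * (GamB J z S - EGam S)) := by
            refine Eq.trans Finset.sum_comm ?_
            refine Finset.sum_congr rfl fun T _ => ?_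
            rw [Finset.mul_sum]
            exact Finset.sum_congr rfl fun z _ => by simp only [hMv]; ring
        _ = ∑ T : NES J, Sigm S T * Mv T := by
            refine Finset.sum_congr rfl fun T _ => ?_
            have hST : ∑ z, q z * (GamB J z T * (GamB J z S - EGam S)) = Sigm S T := by
              rw [hSig]
              have expand : ∀ z ∈ Finset.univ, q z * (GamB J z T * (GamB J z S - EGam S))
                  = q z * ((GamB J z S - EGam S) * (GamB J z T - EGam T))
                    + EGam T * (q z * (GamB J z S - EGam S)) := fun z _ => by ring
              rw [Finset.sum_congr rfl expand, Finset.sum_add_distrib, ← Finset.mul_sum,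
                hzero S, mul_zero, add_zero]
            rw [hST]; ring
        _ = (Sigm *ᵥ Mv) S := rfl
    calc ∑ z, q z * cg z
        = ∑ S : NES J, Mcoef (spernerOf g) S.1 * lam S := hcgM hg1
      _ = lam ⬝ᵥ Mv := by
          rw [dotProduct]
          exact Finset.sum_congr rfl fun S _ => by simp only [hMv]; ring
      _ = lam ⬝ᵥ (Sigm⁻¹ *ᵥ (Sigm *ᵥ Mv)) := by
          rw [Matrix.mulVec_mulVec, Matrix.nonsing_inv_mul _ (isUnit_iff_ne_zero.2 hdet),
            Matrix.one_mulVec]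
      _ = lam ⬝ᵥ (Sigm⁻¹ *ᵥ fun S : NES J => ∑ z, (q z * (if g z = true then (1:ℝ) else 0))
            * (GamB J z S - EGam S)) := by rw [hu]
      _ = ∑ z, (q z * (if g z = true then (1:ℝ) else 0))
            * (lam ⬝ᵥ (Sigm⁻¹ *ᵥ fun S => GamB J z S - EGam S)) := (swap_sum _ _ _ _).symm
      _ = ∑ z, q z * ((lam ⬝ᵥ (Sigm⁻¹ *ᵥ fun S => GamB J z S - EGam S))
            * (if g z = true then (1:ℝ) else 0)) :=
          Finset.sum_congr rfl fun z _ => by ring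

end Key

section Bridge
open MeasureTheory

lemma int_comp {Ω : Type*} [MeasurableSpace Ω] (μ : Measure Ω) [IsProbabilityMeasure μ]
    {α : Type*} [Fintype α] [MeasurableSpace α] [MeasurableSingletonClass α]
    (X : Ω → α) (hX : Measurable X) (f : α → ℝ) :
    ∫ ω, f (X ω) ∂μ = ∑ x, (μ (X ⁻¹' {x})).toReal * f x := by
  rw [← integral_map hX.aemeasurable (measurable_of_finite f).aestronglyMeasurable,
    integral_fintype Integrable.of_finite]
  exact Finset.sum_congr rfl fun x _ => by
    rw [measureReal_def, Measure.map_apply hX (measurableSet_singleton x), smul_eq_mul]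

lemma int_comp2 {Ω : Type*} [MeasurableSpace Ω] (μ : Measure Ω) [IsProbabilityMeasure μ]
    {α β : Type*} [Fintype α] [MeasurableSpace α] [MeasurableSingletonClass α]
    [Fintype β] [MeasurableSpace β] [MeasurableSingletonClass β]
    (X : Ω → α) (hX : Measurable X) (Y : Ω → β) (hY : Measurable Y)
    (hindep : ProbabilityTheory.IndepFun X Y μ) (f : α → β → ℝ) :
    ∫ ω, f (X ω) (Y ω) ∂μ
      = ∑ x, ∑ y, (μ (X ⁻¹' {x})).toReal * ((μ (Y ⁻¹' {y})).toReal * f x y) := by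
  have hmap : μ.map (fun ω => (X ω, Y ω)) = (μ.map X).prod (μ.map Y) :=
    (ProbabilityTheory.indepFun_iff_map_prod_eq_prod_map_map hX.aemeasurable
      hY.aemeasurable).1 hindep
  have hXY : Measurable fun ω => (X ω, Y ω) := hX.prodMk hY
  have step : ∫ ω, f (X ω) (Y ω) ∂μ
      = ∫ p, f p.1 p.2 ∂((μ.map X).prod (μ.map Y)) := by
    rw [← hmap, integral_map hXY.aemeasurable
      (measurable_of_finite (fun p : α × β => f p.1 p.2)).aestronglyMeasurable]
  rw [step, integral_fintype Integrable.of_finite, Fintype.sum_prod_type]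
  refine Finset.sum_congr rfl fun x _ => Finset.sum_congr rfl fun y _ => ?_
  rw [measureReal_def, show ({(x, y)} : Set (α × β)) = {x} ×ˢ {y} by simp [Set.prod_singleton],
    Measure.prod_prod, Measure.map_apply hX (measurableSet_singleton x),
    Measure.map_apply hY (measurableSet_singleton y), ENNReal.toReal_mul, smul_eq_mul]
  ring

end Bridge


lemma sperner_false {J : ℕ} : spernerOf (fun _ : Fin J → Bool => false) = ∅ := by
  ext S; simp [spernerOf]

lemma Mcoef_of_empty {J : ℕ} (S' : Finset (Fin J)) :
    Mcoef (∅ : Finset (Finset (Fin J))) S' = 0 := by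
  rw [Mcoef]
  apply Finset.sum_eq_zero
  intro f hf
  simp only [Finset.mem_filter, Finset.mem_powerset, Finset.subset_empty] at hf
  obtain ⟨rfl, hne, -⟩ := hf
  exact absurd rfl hne.ne_empty

lemma caseM {J : ℕ} (q : (Fin J → Bool) → ℝ) (Mc : Finset (Fin J) → ℝ)
    (lamv : NES J → ℝ) (cc : Finset (Fin J) → (Fin J → Bool) → ℝ)
    (hlam : ∀ S : NES J, lamv S = ∑ z, q z * cc S.1 z)
    (cg : (Fin J → Bool) → ℝ)
    (hcg : ∀ z, cg z = ∑ S' ∈ Finset.univ.filter (fun S' : Finset (Fin J) => S'.Nonempty),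
      Mc S' * cc S' z) :
    ∑ z, q z * cg z = ∑ S : NES J, Mc S.1 * lamv S := by
  calc ∑ z, q z * cg z
      = ∑ z, ∑ S' ∈ Finset.univ.filter (fun S' : Finset (Fin J) => S'.Nonempty),
          q z * (Mc S' * cc S' z) := by
        refine Finset.sum_congr rfl fun z _ => ?_
        rw [hcg z, Finset.mul_sum]
    _ = ∑ S' ∈ Finset.univ.filter (fun S' : Finset (Fin J) => S'.Nonempty),
          Mc S' * ∑ z, q z * cc S' z := by
        refine Eq.trans Finset.sum_comm ?_
        refine Finset.sum_congr rfl fun S' _ => ?_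
        rw [Finset.mul_sum]
        exact Finset.sum_congr rfl fun z _ => by ring
    _ = ∑ S : NES J, Mc S.1 * ∑ z, q z * cc S.1 z :=
        Finset.sum_subtype (Finset.univ.filter (fun S : Finset (Fin J) => S.Nonempty))
          (p := fun S : Finset (Fin J) => S.Nonempty) (by simp)
          (fun S' => Mc S' * ∑ z, q z * cc S' z)
    _ = ∑ S : NES J, Mc S.1 * lamv S :=
        Finset.sum_congr rfl fun S _ => by rw [hlam S]

/-- Property M for a weighting function `c : G × Z → {0,1}`. -/
def PropM {J : ℕ} {γ : Type*} (Dg : γ → (Fin J → Bool) → Bool)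
    (gS : Finset (Fin J) → γ) (c : γ → (Fin J → Bool) → ℝ) : Prop :=
  (∀ g z, c g z = 0 ∨ c g z = 1) ∧
  (∀ g, Dg g = (fun _ => true) → ∀ z, c g z = 0) ∧
  (∀ g, Dg g = (fun _ => false) → ∀ z, c g z = 0) ∧
  (∀ g, Dg g ≠ (fun _ => true) → Dg g ≠ (fun _ => false) → ∀ z,
    c g z = ∑ S' ∈ Finset.univ.filter (fun S' : Finset (Fin J) => S'.Nonempty),
      Mcoef (spernerOf (Dg g)) S' * c (gS S') z)

/-- Corollary to Theorem 1 (group size identification): under the assumptions of the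
main identification theorem, `P(c(G,Z) = 1) = E[h(Z)·D]` with `h` built from
`λ_S = E[c(g(S), Z)]`. -/
theorem stmt14 {Ω : Type*} [MeasurableSpace Ω] (μ : Measure Ω) [IsProbabilityMeasure μ]
    {J : ℕ} (Z : Ω → Fin J → Bool) (hZm : Measurable Z)
    (hfull : ∀ z : Fin J → Bool, 0 < μ {ω | Z ω = z})
    {γ : Type*} [Fintype γ] [MeasurableSpace γ] [MeasurableSingletonClass γ]
    (G : Ω → γ) (hGm : Measurable G)
    (Dg : γ → (Fin J → Bool) → Bool) (hVM : ∀ g, Monotone (Dg g))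
    (gS : Finset (Fin J) → γ)
    (hgS : ∀ S z, Dg (gS S) z = decide (∀ j ∈ S, z j = true))
    (hindep : IndepFun G Z μ)
    (c : γ → (Fin J → Bool) → ℝ) (hM : PropM Dg gS c) :
    (μ {ω | c (G ω) (Z ω) = 1}).toReal =
      ∫ ω, hB μ Z (fun S => ∫ ω', c (gS S.1) (Z ω') ∂μ) (Z ω) *
        (if Dg (G ω) (Z ω) = true then (1 : ℝ) else 0) ∂μ := by
  classical
  have hq1 : ∑ z : Fin J → Bool, (μ (Z ⁻¹' {z})).toReal = 1 := by
    have h1 := int_comp μ Z hZm (fun _ => (1:ℝ))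
    simpa using h1.symm
  have hqpos : ∀ z : Fin J → Bool, 0 < (μ (Z ⁻¹' {z})).toReal :=
    fun z => ENNReal.toReal_pos (hfull z).ne' (measure_ne_top μ _)
  have hEGam : ∀ S : NES J, EGamB μ Z S = ∑ z, (μ (Z ⁻¹' {z})).toReal * GamB J z S :=
    fun S => int_comp μ Z hZm (fun z => GamB J z S)
  have hSigm : ∀ S T : NES J, SigB μ Z S T = ∑ z, (μ (Z ⁻¹' {z})).toReal *
      ((GamB J z S - EGamB μ Z S) * (GamB J z T - EGamB μ Z T)) :=
    fun S T => int_comp μ Z hZm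
      (fun z => (GamB J z S - EGamB μ Z S) * (GamB J z T - EGamB μ Z T))
  have hlam : ∀ S : NES J, (∫ ω', c (gS S.1) (Z ω') ∂μ)
      = ∑ z, (μ (Z ⁻¹' {z})).toReal * c (gS S.1) z :=
    fun S => int_comp μ Z hZm (fun z => c (gS S.1) z)
  have hLHS : (μ {ω | c (G ω) (Z ω) = 1}).toReal = ∫ ω, c (G ω) (Z ω) ∂μ := by
    have hs : MeasurableSet {p : γ × (Fin J → Bool) | c p.1 p.2 = 1} :=
      (Set.to_countable _).measurableSet
    have hmeas : MeasurableSet {ω | c (G ω) (Z ω) = 1} := (hGm.prodMk hZm) hs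
    rw [← measureReal_def, ← integral_indicator_one hmeas]
    refine integral_congr_ae (Filter.Eventually.of_forall fun ω => ?_)
    rw [Set.indicator_apply]
    rcases hM.1 (G ω) (Z ω) with h | h <;> simp [Set.mem_setOf_eq, h]
  calc (μ {ω | c (G ω) (Z ω) = 1}).toReal
      = ∫ ω, c (G ω) (Z ω) ∂μ := hLHS
    _ = ∑ g : γ, ∑ z : Fin J → Bool, (μ (G ⁻¹' {g})).toReal
          * ((μ (Z ⁻¹' {z})).toReal * c g z) :=
        int_comp2 μ G hGm Z hZm hindep c
    _ = ∑ g : γ, ∑ z : Fin J → Bool, (μ (G ⁻¹' {g})).toReal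
          * ((μ (Z ⁻¹' {z})).toReal
            * (hB μ Z (fun S => ∫ ω', c (gS S.1) (Z ω') ∂μ) z
              * (if Dg g z = true then (1:ℝ) else 0))) := by
        refine Finset.sum_congr rfl fun g _ => ?_
        rw [← Finset.mul_sum, ← Finset.mul_sum]
        congr 1
        simp only [hB]
        refine key_lemma (fun z => (μ (Z ⁻¹' {z})).toReal) hq1 hqpos
          (fun S => EGamB μ Z S) hEGam (SigB μ Z) hSigm
          (fun S => ∫ ω', c (gS S.1) (Z ω') ∂μ) (Dg g) (hVM g) (c g)
          (fun h1 => hM.2.1 g h1) (fun hne => ?_)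
        by_cases hfalse : Dg g = fun _ => false
        · have hz : ∀ z, c g z = 0 := hM.2.2.1 g hfalse
          have hR : ∀ S : NES J, Mcoef (spernerOf (Dg g)) S.1 = 0 := by
            intro S
            rw [hfalse, sperner_false, Mcoef_of_empty]
          simp [hz, hR]
        · exact caseM (fun z => (μ (Z ⁻¹' {z})).toReal)
            (Mcoef (spernerOf (Dg g)))
            (fun S => ∫ ω', c (gS S.1) (Z ω') ∂μ)
            (fun S' z => c (gS S') z) (fun S => hlam S) (c g)
            (hM.2.2.2 g hne hfalse)
    _ = ∫ ω, hB μ Z (fun S => ∫ ω', c (gS S.1) (Z ω') ∂μ) (Z ω)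
          * (if Dg (G ω) (Z ω) = true then (1 : ℝ) else 0) ∂μ :=
        (int_comp2 μ G hGm Z hZm hindep
          (fun g z => hB μ Z (fun S => ∫ ω', c (gS S.1) (Z ω') ∂μ) z
            * (if Dg g z = true then (1:ℝ) else 0))).symm
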